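/- Let n ≥ 3, let s_i, s_j be reflections and x^m a rotation in D_n. Then for every ℓ ∈ ℤ, the triple (s_i, s_j, x^m) is Hurwitz equivalent to (s_{i+2ℓm}, s_{j+2ℓm}, x^m); more precisely, (s_i, s_j, x^m)·(σ_2 σ_1 σ_1 σ_2)^ℓ = (s_{i+2ℓm}, s_{j+2ℓm}, x^m). -/

import Mathlib

/-- One elementary braid (Hurwitz) move on a tuple of elements of a group `G`,
encoded as a list: `σᵢ` replaces the adjacent pair `(a, b)` occurring at some
position by `(a * b * a⁻¹, a)`. -/
inductive BraidStep {G : Type*} [Group G] : List G → List G → Prop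
  | head (a b : G) (t : List G) : BraidStep (a :: b :: t) (a * b * a⁻¹ :: a :: t)
  | tail (a : G) {l₁ l₂ : List G} : BraidStep l₁ l₂ → BraidStep (a :: l₁) (a :: l₂)

/-- Hurwitz (braid) equivalence: the equivalence relation generated by
elementary braid moves (so finitely many moves and their inverses). -/
def HurwitzEquiv {G : Type*} [Group G] : List G → List G → Prop :=
  Relation.EqvGen BraidStep

/-- Braid-automorphism equivalence: `v` and `w` differ by a braid move sequence
together with the diagonal action of a group automorphism. -/
def BAEquiv {G : Type*} [Group G] (v w : List G) : Prop :=
  ∃ φ : G ≃* G, HurwitzEquiv (v.map ⇑φ) w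

/-- A `G`-Hurwitz vector (genus 0): all entries nontrivial, the entries
generate `G`, and the product of the entries is `1`. -/
def IsHurwitzVector {G : Type*} [Group G] (v : List G) : Prop :=
  (∀ c ∈ v, c ≠ 1) ∧ Subgroup.closure {g | g ∈ v} = ⊤ ∧ v.prod = 1

/-- The reflection `s i = x^i * y` of the dihedral group `D_n`,
where `x = DihedralGroup.r 1` and `y = DihedralGroup.sr 0`. -/
def sD {n : ℕ} (i : ZMod n) : DihedralGroup n :=
  DihedralGroup.r i * DihedralGroup.sr 0

/-- Being a reflection in the dihedral group. -/
def IsReflection {n : ℕ} (g : DihedralGroup n) : Prop :=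
  ∃ i : ZMod n, g = DihedralGroup.sr i

/-- The elementary braid `σ₁` acting on triples. -/
def sigma1 {G : Type*} [Group G] : Equiv.Perm (G × G × G) where
  toFun p := (p.1 * p.2.1 * p.1⁻¹, p.1, p.2.2)
  invFun p := (p.2.1, p.2.1⁻¹ * p.1 * p.2.1, p.2.2)
  left_inv := by rintro ⟨a, b, c⟩; simp [mul_assoc]
  right_inv := by rintro ⟨a, b, c⟩; simp [mul_assoc]

/-- The elementary braid `σ₂` acting on triples. -/
def sigma2 {G : Type*} [Group G] : Equiv.Perm (G × G × G) where
  toFun p := (p.1, p.2.1 * p.2.2 * p.2.1⁻¹, p.2.1)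
  invFun p := (p.1, p.2.2, p.2.2⁻¹ * p.2.1 * p.2.2)
  left_inv := by rintro ⟨a, b, c⟩; simp [mul_assoc]
  right_inv := by rintro ⟨a, b, c⟩; simp [mul_assoc]

/-- for all `ℓ ∈ ℤ`, `(s_i, s_j, x^m)` is Hurwitz equivalent to
`(s_{i+2ℓm}, s_{j+2ℓm}, x^m)`; more precisely
`(s_i, s_j, x^m)·(σ₂σ₁σ₁σ₂)^ℓ = (s_{i+2ℓm}, s_{j+2ℓm}, x^m)` (the braid word acts on the
right, i.e. `σ₂` is applied first). -/
lemma braid_word_apply {n : ℕ} (i j m : ZMod n) :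
    (sigma2 * sigma1 * sigma1 * sigma2 :
        Equiv.Perm (DihedralGroup n × DihedralGroup n × DihedralGroup n))
        (sD i, sD j, DihedralGroup.r m) =
      (sD (i + 2 * m), sD (j + 2 * m), DihedralGroup.r m) := by
  simp only [Equiv.Perm.mul_apply, sigma1, sigma2, sD, Equiv.coe_fn_mk,
    DihedralGroup.r_mul_sr, DihedralGroup.sr_mul_sr, DihedralGroup.r_mul_r,
    DihedralGroup.sr_mul_r, mul_inv_rev]
  have hinv : ∀ a : ZMod n, (DihedralGroup.sr a)⁻¹ = DihedralGroup.sr a := fun a => by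
    rw [inv_eq_iff_mul_eq_one, DihedralGroup.sr_mul_self]
  have hrinv : ∀ a : ZMod n, (DihedralGroup.r a)⁻¹ = DihedralGroup.r (-a) := fun a => by
    rw [inv_eq_iff_mul_eq_one, DihedralGroup.r_mul_r, add_neg_cancel, DihedralGroup.one_def]
  simp only [hinv, hrinv, DihedralGroup.r_mul_sr, DihedralGroup.sr_mul_sr,
    DihedralGroup.r_mul_r, DihedralGroup.sr_mul_r]
  simp only [Prod.mk.injEq]
  refine ⟨?_, ?_, ?_⟩ <;> · congr 1; ring

lemma braid_word_hurwitz {n : ℕ} (i j m : ZMod n) :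
    HurwitzEquiv [sD i, sD j, DihedralGroup.r m]
      [sD (i + 2 * m), sD (j + 2 * m), DihedralGroup.r m] := by
  have key := braid_word_apply i j m
  -- decompose into four braid steps matching σ2, σ1, σ1, σ2
  have step : ∀ a b c a' b' c' : DihedralGroup n,
      (sigma2 * sigma1 * sigma1 * sigma2 :
        Equiv.Perm (DihedralGroup n × DihedralGroup n × DihedralGroup n)) (a, b, c)
        = (a', b', c') → HurwitzEquiv [a, b, c] [a', b', c'] := by
    intro a b c a' b' c' h
    simp only [Equiv.Perm.mul_apply, sigma1, sigma2, Equiv.coe_fn_mk, Prod.mk.injEq] at h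
    obtain ⟨h1, h2, h3⟩ := h
    subst h1; subst h2; subst h3
    refine Relation.EqvGen.trans _ _ _ (Relation.EqvGen.rel _ _
      (BraidStep.tail a (BraidStep.head b c []))) ?_
    refine Relation.EqvGen.trans _ _ _ (Relation.EqvGen.rel _ _
      (BraidStep.head a (b * c * b⁻¹) [b])) ?_
    refine Relation.EqvGen.trans _ _ _ (Relation.EqvGen.rel _ _
      (BraidStep.head (a * (b * c * b⁻¹) * a⁻¹) a [b])) ?_
    exact Relation.EqvGen.rel _ _
      (BraidStep.tail _ (BraidStep.head (a * (b * c * b⁻¹) * a⁻¹) b []))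
  exact step _ _ _ _ _ _ key

theorem conjugate_pair_by_rotation (n : ℕ) (hn : 3 ≤ n) (i j m : ZMod n) (ℓ : ℤ) :
    HurwitzEquiv [sD i, sD j, DihedralGroup.r m]
      [sD (i + 2 * (ℓ : ZMod n) * m), sD (j + 2 * (ℓ : ZMod n) * m), DihedralGroup.r m] ∧
    ((sigma2 * sigma1 * sigma1 * sigma2 :
        Equiv.Perm (DihedralGroup n × DihedralGroup n × DihedralGroup n)) ^ ℓ)
        (sD i, sD j, DihedralGroup.r m) =
      (sD (i + 2 * (ℓ : ZMod n) * m), sD (j + 2 * (ℓ : ZMod n) * m), DihedralGroup.r m) := by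
  set w : Equiv.Perm (DihedralGroup n × DihedralGroup n × DihedralGroup n) :=
    sigma2 * sigma1 * sigma1 * sigma2 with hw
  induction ℓ using Int.induction_on generalizing i j with
  | zero =>
    simp only [Int.cast_zero, mul_zero, zero_mul, add_zero, zpow_zero, Equiv.Perm.coe_one, id]
    exact ⟨Relation.EqvGen.refl _, trivial⟩
  | succ k ih =>
    obtain ⟨ih1, ih2⟩ := ih (i + 2 * m) (j + 2 * m)
    have e1 : i + 2 * ((k + 1 : ℤ) : ZMod n) * m = (i + 2 * m) + 2 * ((k : ℤ) : ZMod n) * m := by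
      push_cast; ring
    have e2 : j + 2 * ((k + 1 : ℤ) : ZMod n) * m = (j + 2 * m) + 2 * ((k : ℤ) : ZMod n) * m := by
      push_cast; ring
    have hpow : w ^ ((k : ℤ) + 1) = w ^ (k : ℤ) * w := zpow_add_one w k
    refine ⟨?_, ?_⟩
    · rw [e1, e2]
      exact Relation.EqvGen.trans _ _ _ (braid_word_hurwitz i j m) ih1
    · rw [e1, e2, hpow, Equiv.Perm.mul_apply, hw, braid_word_apply, ← hw]
      exact ih2
  | pred k ih =>
    obtain ⟨ih1, ih2⟩ := ih i j
    have e1 : i + 2 * ((-k : ℤ) : ZMod n) * m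
        = (i + 2 * ((-k - 1 : ℤ) : ZMod n) * m) + 2 * m := by push_cast; ring
    have e2 : j + 2 * ((-k : ℤ) : ZMod n) * m
        = (j + 2 * ((-k - 1 : ℤ) : ZMod n) * m) + 2 * m := by push_cast; ring
    have hb := braid_word_hurwitz (i + 2 * ((-k - 1 : ℤ) : ZMod n) * m)
      (j + 2 * ((-k - 1 : ℤ) : ZMod n) * m) m
    have ha := braid_word_apply (n := n) (i + 2 * ((-k - 1 : ℤ) : ZMod n) * m)
      (j + 2 * ((-k - 1 : ℤ) : ZMod n) * m) m
    rw [← e1, ← e2] at hb ha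
    have hpow : w ^ ((-k : ℤ) - 1) = w⁻¹ * w ^ (-k : ℤ) := by
      rw [sub_eq_add_neg, add_comm, zpow_add, zpow_neg_one]
    refine ⟨?_, ?_⟩
    · exact Relation.EqvGen.trans _ _ _ ih1 (Relation.EqvGen.symm _ _ hb)
    · rw [hpow, Equiv.Perm.mul_apply, ih2, ← ha, ← hw, ← Equiv.Perm.mul_apply,
        inv_mul_cancel, Equiv.Perm.one_apply]
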